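/- If $Z : I \to \mathbb{R}^{3\times 3}$ satisfies the Riccati-type evolution equation $\dot Z = -Z^2 - M(t)$ where $M(t)$ is symmetric for all $t$, and $Z(t_0)$ is symmetric, then $Z(t)$ is symmetric for all $t \in I$. -/

import Mathlib

open Matrix Set

lemma riccati_lip_aux (C : ℝ) (hC0 : 0 ≤ C) (B : Fin 3 → Fin 3 → ℝ)
    (hB : ∀ i j, |B i j| ≤ C) :
    LipschitzWith (6 * C.toNNReal)
      (fun x : Fin 3 → Fin 3 → ℝ =>
        fun i j => -((∑ k, B i k * x k j) + ∑ k, x i k * B j k)) := by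
  apply LipschitzWith.of_dist_le_mul
  intro x y
  rw [dist_eq_norm, dist_eq_norm]
  have hKnn : (0:ℝ) ≤ ((6 * C.toNNReal : NNReal) : ℝ) * ‖x - y‖ := by positivity
  rw [pi_norm_le_iff_of_nonneg hKnn]
  intro i
  rw [pi_norm_le_iff_of_nonneg hKnn]
  intro j
  have hd : ∀ k l, |x k l - y k l| ≤ ‖x - y‖ := by
    intro k l
    calc |x k l - y k l| = ‖(x - y) k l‖ := by simp [Real.norm_eq_abs]
      _ ≤ ‖(x - y) k‖ := norm_le_pi_norm _ l
      _ ≤ ‖x - y‖ := norm_le_pi_norm _ k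
  have e1 : ((fun i j => -((∑ k, B i k * x k j) + ∑ k, x i k * B j k)) -
      (fun i j => -((∑ k, B i k * y k j) + ∑ k, y i k * B j k) : Fin 3 → Fin 3 → ℝ)) i j
      = (∑ k, B i k * (y k j - x k j)) + ∑ k, (y i k - x i k) * B j k := by
    simp [mul_sub, sub_mul, Finset.sum_sub_distrib]
    ring
  rw [Real.norm_eq_abs, e1]
  have h1 : |∑ k, B i k * (y k j - x k j)| ≤ 3 * (C * ‖x - y‖) := by
    calc |∑ k, B i k * (y k j - x k j)| ≤ ∑ k, |B i k * (y k j - x k j)| :=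
          Finset.abs_sum_le_sum_abs _ _
      _ ≤ ∑ _k : Fin 3, C * ‖x - y‖ := by
          apply Finset.sum_le_sum
          intro k _
          rw [abs_mul]
          exact mul_le_mul (hB i k) (by rw [abs_sub_comm]; exact hd k j) (abs_nonneg _)
            hC0
      _ = 3 * (C * ‖x - y‖) := by simp
  have h2 : |∑ k, (y i k - x i k) * B j k| ≤ 3 * (C * ‖x - y‖) := by
    calc |∑ k, (y i k - x i k) * B j k| ≤ ∑ k, |(y i k - x i k) * B j k| :=
          Finset.abs_sum_le_sum_abs _ _
      _ ≤ ∑ _k : Fin 3, C * ‖x - y‖ := by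
          apply Finset.sum_le_sum
          intro k _
          rw [abs_mul, mul_comm]
          exact mul_le_mul (hB j k) (by rw [abs_sub_comm]; exact hd i k) (abs_nonneg _)
            hC0
      _ = 3 * (C * ‖x - y‖) := by simp
  have hc : ((6 * C.toNNReal : NNReal) : ℝ) = 6 * C := by
    simp [Real.coe_toNNReal C hC0]
  calc |(∑ k, B i k * (y k j - x k j)) + ∑ k, (y i k - x i k) * B j k|
      ≤ |∑ k, B i k * (y k j - x k j)| + |∑ k, (y i k - x i k) * B j k| := abs_add_le _ _
    _ ≤ 3 * (C * ‖x - y‖) + 3 * (C * ‖x - y‖) := add_le_add h1 h2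
    _ ≤ ((6 * C.toNNReal : NNReal) : ℝ) * ‖x - y‖ := by rw [hc]; ring_nf; rfl

lemma pi_entry_abs_le (x : Fin 3 → Fin 3 → ℝ) (i j : Fin 3) : |x i j| ≤ ‖x‖ :=
  calc |x i j| = ‖x i j‖ := (Real.norm_eq_abs _).symm
    _ ≤ ‖x i‖ := norm_le_pi_norm _ j
    _ ≤ ‖x‖ := norm_le_pi_norm _ i

/-- If `Z` solves the Riccati-type matrix ODE `Ż = -Z² - M(t)` on an interval `I` with
`M(t)` symmetric and continuous, and `Z(t₀)` is symmetric, then `Z(t)` is symmetric for all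
`t ∈ I` (an initially irrotational flow remains irrotational). -/

theorem riccati_evolution_preserves_symmetry
    (I : Set ℝ) (hI : I.OrdConnected)
    (Z M : ℝ → Matrix (Fin 3) (Fin 3) ℝ)
    (hM : ∀ i j, ContinuousOn (fun t => M t i j) I)
    (hMsym : ∀ t ∈ I, (M t)ᵀ = M t)
    (hZ : ∀ t ∈ I, ∀ i j, HasDerivAt (fun s => Z s i j) ((-(Z t * Z t) - M t) i j) t)
    (t₀ : ℝ) (ht₀ : t₀ ∈ I) (hZ0 : (Z t₀)ᵀ = Z t₀) :
    ∀ t ∈ I, (Z t)ᵀ = Z t := by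
  intro t₁ ht₁
  set A : ℝ → (Fin 3 → Fin 3 → ℝ) := fun s i j => Z s i j - Z s j i with hAdef
  -- continuity of Z entries on I
  have hZc : ∀ i j, ContinuousOn (fun s => Z s i j) I := fun i j s hs =>
    (hZ s hs i j).continuousAt.continuousWithinAt
  have hAc : ContinuousOn A I := by
    apply continuousOn_pi.2
    intro i
    apply continuousOn_pi.2
    intro j
    exact (hZc i j).sub (hZc j i)
  have hA0 : A t₀ = 0 := by
    funext i j
    have := congrFun (congrFun hZ0 i) j
    simp only [Matrix.transpose_apply] at this
    simp [A, this]
  have main : ∀ a b : ℝ, a ≤ b → Icc a b ⊆ I →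
      ((A a = 0 → A b = 0) ∧ (A b = 0 → A a = 0)) := by
    intro a b hab hsub
    -- bound on Z over Icc a b
    obtain ⟨C₀, hC₀⟩ : ∃ C₀, ∀ s ∈ Icc a b, ‖(fun i j => Z s i j : Fin 3 → Fin 3 → ℝ)‖ ≤ C₀ := by
      apply (isCompact_Icc).exists_bound_of_continuousOn
      apply (continuousOn_pi.2 fun i => continuousOn_pi.2 fun j => (hZc i j)).mono hsub
    set C : ℝ := max C₀ 0 with hCdef
    have hC0 : 0 ≤ C := le_max_right _ _
    have hC : ∀ s ∈ Icc a b, ∀ i j, |Z s i j| ≤ C := by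
      intro s hs i j
      calc |Z s i j| = |(fun i j => Z s i j : Fin 3 → Fin 3 → ℝ) i j| := rfl
        _ ≤ ‖(fun i j => Z s i j : Fin 3 → Fin 3 → ℝ)‖ := pi_entry_abs_le _ i j
        _ ≤ C₀ := hC₀ s hs
        _ ≤ C := le_max_left _ _
    set W : ℝ → (Fin 3 → Fin 3 → ℝ) := fun s i j => Z (projIcc a b hab s) i j with hWdef
    have hW : ∀ s, ∀ i j, |W s i j| ≤ C := fun s => hC _ (projIcc a b hab s).2
    have hWt : ∀ s ∈ Icc a b, ∀ i j, W s i j = Z s i j := by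
      intro s hs i j
      simp [W, projIcc_of_mem hab hs]
    set v : ℝ → (Fin 3 → Fin 3 → ℝ) → (Fin 3 → Fin 3 → ℝ) := fun t x =>
      fun i j => -((∑ k, W t i k * x k j) + ∑ k, x i k * W t j k) with hvdef
    have hv : ∀ t, LipschitzOnWith (6 * C.toNNReal) (v t) univ := by
      intro t
      rw [hvdef]
      exact (riccati_lip_aux C hC0 (W t) (hW t)).lipschitzOnWith
    have hv0 : ∀ t, v t 0 = 0 := by
      intro t; funext i j; simp [v]
    have hg' : ∀ t, HasDerivAt (fun _ : ℝ => (0 : Fin 3 → Fin 3 → ℝ)) (v t 0) t := by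
      intro t; rw [hv0]; exact hasDerivAt_const _ _
    have hAd : ∀ s ∈ Icc a b, HasDerivAt A (v s (A s)) s := by
      intro s hs
      have hsI : s ∈ I := hsub hs
      apply hasDerivAt_pi.2
      intro i
      apply hasDerivAt_pi.2
      intro j
      have h1 := (hZ s hsI i j).sub (hZ s hsI j i)
      convert h1 using 1
      · rfl
      have hM' : M s j i = M s i j := by
        have := congrFun (congrFun (hMsym s hsI) i) j
        simpa [Matrix.transpose_apply] using this
      simp only [v, A, Matrix.sub_apply, Matrix.neg_apply, Matrix.mul_apply, hWt s hs]
      rw [hM']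
      simp only [mul_sub, sub_mul, Finset.sum_sub_distrib]
      have hcomm : ∑ x : Fin 3, Z s x i * Z s j x = ∑ x : Fin 3, Z s j x * Z s x i :=
        Finset.sum_congr rfl fun k _ => mul_comm _ _
      rw [hcomm]
      ring
    have hAcc : ContinuousOn A (Icc a b) := hAc.mono hsub
    constructor
    · intro ha
      have := ODE_solution_unique_of_mem_Icc_right (v := v) (s := fun _ => univ) (fun t _ => hv t)
        hAcc (fun s hs => (hAd s (Ico_subset_Icc_self hs)).hasDerivWithinAt)
        (fun _ _ => trivial) continuousOn_const
        (fun s _ => (hg' s).hasDerivWithinAt) (fun _ _ => trivial) (by simpa using ha)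
      exact this (right_mem_Icc.2 hab)
    · intro hb
      have := ODE_solution_unique_of_mem_Icc_left (v := v) (s := fun _ => univ) (fun t _ => hv t)
        hAcc (fun s hs => (hAd s (Ioc_subset_Icc_self hs)).hasDerivWithinAt)
        (fun _ _ => trivial) continuousOn_const
        (fun s _ => (hg' s).hasDerivWithinAt) (fun _ _ => trivial) (by simpa using hb)
      exact this (left_mem_Icc.2 hab)
  have hA1 : A t₁ = 0 := by
    rcases le_total t₀ t₁ with h | h
    · exact (main t₀ t₁ h (hI.out ht₀ ht₁)).1 hA0
    · exact (main t₁ t₀ h (hI.out ht₁ ht₀)).2 hA0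
  ext i j
  have := congrFun (congrFun hA1 j) i
  simp only [A, Pi.zero_apply] at this
  simp only [Matrix.transpose_apply]
  linarith
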